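/- In the linear conjugate gradient algorithm applied to f(x) = xᵀAx/2 - bᵀx with A symmetric positive definite, the residuals r_k = b - A x_k generated by the algorithm are pairwise orthogonal: r_iᵀ r_j = 0 for i ≠ j (as long as none is zero). -/

import Mathlib

open Matrix

theorem cg_residuals_orthogonal (n : ℕ) (A : Matrix (Fin n) (Fin n) ℝ)
    (hA : A.PosDef) (b : Fin n → ℝ)
    (x r nv : ℕ → (Fin n → ℝ)) (β α : ℕ → ℝ)
    (hr0 : r 0 = b - A *ᵥ x 0)
    (hn1 : nv 1 = r 0)
    (hβ : ∀ k, 2 ≤ k → β k = (r (k-1) ⬝ᵥ r (k-1)) / (r (k-2) ⬝ᵥ r (k-2)))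
    (hn : ∀ k, 2 ≤ k → nv k = β k • nv (k-1) + r (k-1))
    (hα : ∀ k, 1 ≤ k → α k = (r (k-1) ⬝ᵥ r (k-1)) / (nv k ⬝ᵥ (A *ᵥ nv k)))
    (hx : ∀ k, 1 ≤ k → x k = x (k-1) + α k • nv k)
    (hrk : ∀ k, 1 ≤ k → r k = r (k-1) - α k • (A *ᵥ nv k)) :
    ∀ i j : ℕ, i ≠ j → (∀ l ≤ max i j, r l ≠ 0) → r i ⬝ᵥ r j = 0 := by
  -- symmetry of the bilinear form
  have hsym : ∀ v w : Fin n → ℝ, v ⬝ᵥ (A *ᵥ w) = w ⬝ᵥ (A *ᵥ v) := by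
    intro v w
    rw [Matrix.dotProduct_mulVec, ← Matrix.mulVec_transpose,
      ← Matrix.conjTranspose_eq_transpose_of_trivial, hA.1.eq, dotProduct_comm]
  have hself : ∀ v : Fin n → ℝ, v ≠ 0 → v ⬝ᵥ v ≠ 0 := fun v hv => by
    simpa using (dotProduct_self_eq_zero (v := v)).not.mpr hv
  have hposd : ∀ v : Fin n → ℝ, v ≠ 0 → 0 < v ⬝ᵥ (A *ᵥ v) := fun v hv => by
    simpa using hA.dotProduct_mulVec_pos hv
  have key : ∀ m : ℕ, (∀ l, l ≤ m → r l ≠ 0) →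
      (∀ i j, i < j → j ≤ m → r i ⬝ᵥ r j = 0) ∧
      (∀ i j, 1 ≤ i → i < j → j ≤ m → nv i ⬝ᵥ (A *ᵥ nv j) = 0) ∧
      (∀ i j, 1 ≤ i → i ≤ j → j ≤ m → nv i ⬝ᵥ r j = 0) := by
    intro m
    induction m with
    | zero =>
      intro _
      refine ⟨fun i j h1 h2 => absurd (h1.trans_le h2) (Nat.not_lt_zero i),
        fun i j h0 h1 h2 => absurd ((h0.trans_lt h1).trans_le h2) (by omega),
        fun i j h0 h1 h2 => by omega⟩
    | succ k ih =>
      intro hnz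
      obtain ⟨ha, hb, hc⟩ := ih (fun l hl => hnz l (Nat.le_succ_of_le hl))
      -- nv i ⬝ r (i-1) = r (i-1) ⬝ r (i-1)
      have hd : ∀ i, 1 ≤ i → i ≤ k + 1 → nv i ⬝ᵥ r (i - 1) = r (i - 1) ⬝ᵥ r (i - 1) := by
        intro i h1 h2
        rcases Nat.eq_or_lt_of_le h1 with h | h
        · rw [← h]; simp [hn1]
        · have h2' : 2 ≤ i := h
          rw [hn i h2']
          have : nv (i - 1) ⬝ᵥ r (i - 1) = 0 := hc (i - 1) (i - 1) (by omega) le_rfl (by omega)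
          simp [add_dotProduct, smul_dotProduct, this]
      have hdpos : ∀ i, 1 ≤ i → i ≤ k + 1 → 0 < nv i ⬝ᵥ (A *ᵥ nv i) := by
        intro i h1 h2
        apply hposd
        intro h0
        have := hd i h1 h2
        rw [h0] at this
        simp only [zero_dotProduct] at this
        exact hself (r (i - 1)) (hnz (i - 1) (by omega)) this.symm
      have hαne : ∀ i, 1 ≤ i → i ≤ k + 1 → α i ≠ 0 := by
        intro i h1 h2
        rw [hα i h1]
        exact div_ne_zero (hself _ (hnz (i - 1) (by omega))) (hdpos i h1 h2).ne'
      -- r j ⬝ (A nv i) in terms of residuals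
      have hAr : ∀ i, 1 ≤ i → i ≤ k + 1 → ∀ v : Fin n → ℝ,
          v ⬝ᵥ (A *ᵥ nv i) = (α i)⁻¹ * (v ⬝ᵥ r (i - 1) - v ⬝ᵥ r i) := by
        intro i h1 h2 v
        have h := hrk i h1
        have : α i • (A *ᵥ nv i) = r (i - 1) - r i := by rw [h]; abel
        have h3 : v ⬝ᵥ (α i • (A *ᵥ nv i)) = v ⬝ᵥ (r (i - 1) - r i) := by rw [this]
        rw [dotProduct_smul, dotProduct_sub] at h3
        rw [smul_eq_mul] at h3
        rw [eq_inv_mul_iff_mul_eq₀ (hαne i h1 h2)]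
        linarith
      -- conjugacy with the new direction
      have hb' : ∀ i, 1 ≤ i → i ≤ k → nv i ⬝ᵥ (A *ᵥ nv (k + 1)) = 0 := by
        intro i h1 h2
        have hk1 : 1 ≤ k := le_trans h1 h2
        have h2k : 2 ≤ k + 1 := by omega
        rw [hn (k + 1) h2k]
        simp only [Nat.add_sub_cancel]
        rw [Matrix.mulVec_add, Matrix.mulVec_smul, dotProduct_add,
          dotProduct_smul]
        have hrA : nv i ⬝ᵥ (A *ᵥ r k) = (α i)⁻¹ * (r k ⬝ᵥ r (i - 1) - r k ⬝ᵥ r i) := by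
          rw [hsym]
          exact hAr i h1 (by omega) (r k)
        rcases Nat.eq_or_lt_of_le h2 with h | h
        · -- i = k
          subst h
          have hik : r i ⬝ᵥ r (i - 1) = 0 := by
            rw [dotProduct_comm]; exact ha (i - 1) i (by omega) (by omega)
          rw [hrA, hik]
          have hnvA := (hdpos i h1 (by omega)).ne'
          have hrr1 := hself (r (i - 1)) (hnz (i - 1) (by omega))
          rw [hβ (i + 1) (by omega), hα i h1]
          simp only [Nat.add_sub_cancel, show i + 1 - 2 = i - 1 by omega]
          field_simp
          have hinv : r (i - 1) ⬝ᵥ r (i - 1) * (r (i - 1) ⬝ᵥ r (i - 1))⁻¹ = 1 := mul_inv_cancel₀ hrr1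
          linear_combination (nv i ⬝ᵥ (A *ᵥ nv i) * r i ⬝ᵥ r i) * hinv
        · -- i < k
          have e1 : nv i ⬝ᵥ (A *ᵥ nv k) = 0 := hb i k h1 h (by omega)
          have e2 : r k ⬝ᵥ r (i - 1) = 0 := by
            rw [dotProduct_comm]; exact ha (i - 1) k (by omega) (by omega)
          have e3 : r k ⬝ᵥ r i = 0 := by
            rw [dotProduct_comm]; exact ha i k h (by omega)
          rw [hrA, e1, e2, e3]
          simp
      -- r i ⬝ A nv (k+1) for i < k is 0 ; for i = k it equals nv(k+1) A nv(k+1)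
      have hrAn : ∀ i, i ≤ k → r i ⬝ᵥ (A *ᵥ nv (k + 1)) =
          (if i = k then nv (k + 1) ⬝ᵥ (A *ᵥ nv (k + 1)) else 0) := by
        intro i h2
        have hrep : r i ⬝ᵥ (A *ᵥ nv (k + 1)) =
            nv (i + 1) ⬝ᵥ (A *ᵥ nv (k + 1)) -
            (if 1 ≤ i then β (i + 1) * (nv i ⬝ᵥ (A *ᵥ nv (k + 1))) else 0) := by
          rcases Nat.eq_zero_or_pos i with h0 | h0
          · subst h0; simp [← hn1]
          · have : nv (i + 1) = β (i + 1) • nv i + r i := by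
              have := hn (i + 1) (by omega)
              simpa using this
            rw [show r i = nv (i + 1) - β (i + 1) • nv i by rw [this]; abel]
            rw [sub_dotProduct, smul_dotProduct,
              if_pos (show 1 ≤ i from h0), smul_eq_mul]
        rcases Nat.eq_or_lt_of_le h2 with h | h
        · subst h
          rw [if_pos rfl, hrep]
          rcases Nat.eq_zero_or_pos i with h0 | h0
          · simp [h0]
          · rw [if_pos (show 1 ≤ i from h0), hb' i h0 le_rfl]
            ring
        · rw [if_neg (by omega), hrep, hb' (i + 1) (by omega) (by omega)]
          rcases Nat.eq_zero_or_pos i with h0 | h0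
          · simp [h0]
          · rw [if_pos (show 1 ≤ i from h0), hb' i h0 (by omega)]
            ring
      -- orthogonality of new residual to old residuals
      have ha' : ∀ i, i ≤ k → r i ⬝ᵥ r (k + 1) = 0 := by
        intro i h2
        rw [hrk (k + 1) (by omega)]
        simp only [Nat.add_sub_cancel]
        rw [dotProduct_sub, dotProduct_smul, hrAn i h2]
        rcases Nat.eq_or_lt_of_le h2 with h | h
        · subst h
          rw [if_pos rfl, hα (i + 1) (by omega)]
          simp only [Nat.add_sub_cancel]
          have := (hdpos (i + 1) (by omega) le_rfl).ne'
          rw [smul_eq_mul, div_mul_cancel₀ _ this, sub_self]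
        · rw [if_neg (by omega), ha i k h (by omega)]
          simp
      -- new direction orthogonality to new residual
      have hc' : ∀ i, 1 ≤ i → i ≤ k + 1 → nv i ⬝ᵥ r (k + 1) = 0 := by
        intro i h1 h2
        rw [hrk (k + 1) (by omega)]
        simp only [Nat.add_sub_cancel]
        rw [dotProduct_sub, dotProduct_smul]
        rcases Nat.eq_or_lt_of_le h2 with h | h
        · subst h
          have e1 : nv (k + 1) ⬝ᵥ r k = r k ⬝ᵥ r k := by
            simpa using hd (k + 1) (by omega) le_rfl
          rw [e1, hα (k + 1) (by omega)]
          simp only [Nat.add_sub_cancel]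
          have := (hdpos (k + 1) (by omega) le_rfl).ne'
          rw [smul_eq_mul, div_mul_cancel₀ _ this, sub_self]
        · have h2' : i ≤ k := by omega
          rw [hc i k h1 h2' le_rfl, hb' i h1 h2']
          simp
      refine ⟨?_, ?_, ?_⟩
      · intro i j hij hjk
        rcases Nat.eq_or_lt_of_le hjk with h | h
        · subst h; exact ha' i (by omega)
        · exact ha i j hij (by omega)
      · intro i j h1 hij hjk
        rcases Nat.eq_or_lt_of_le hjk with h | h
        · subst h; exact hb' i h1 (by omega)
        · exact hb i j h1 hij (by omega)
      · intro i j h1 hij hjk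
        rcases Nat.eq_or_lt_of_le hjk with h | h
        · subst h; exact hc' i h1 hij
        · exact hc i j h1 hij (by omega)
  intro i j hij hnz
  rcases Nat.lt_or_ge i j with h | h
  · exact (key j (fun l hl => hnz l (by omega))).1 i j h le_rfl
  · have h' : j < i := lt_of_le_of_ne h (Ne.symm hij)
    rw [dotProduct_comm]
    exact (key i (fun l hl => hnz l (by omega))).1 j i h' le_rfl
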